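/- For every $\gamma\in(0,1)$, every $t\in(0,1)$, and every $\tau\in\{-1,1\}$, one has $\int_t^1 (x-t)(\tfrac{1}{2}-x)\,dx + \gamma^{\tau}\int_0^t (x-t)(\tfrac{1}{2}-x)\,dx = \tfrac{1}{12}\big(-1+(1-\gamma^{\tau})(3-2t)t^2\big)$, and this quantity is strictly negative. -/

import Mathlib

lemma integral_aux (t a b : ℝ) :
    ∫ x in a..b, (x - t) * (1 / 2 - x) =
      (-(b^3)/3 + (t + 1/2) * b^2 / 2 - t/2 * b)
      - (-(a^3)/3 + (t + 1/2) * a^2 / 2 - t/2 * a) := by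
  have h : ∀ x ∈ Set.uIcc a b,
      HasDerivAt (fun x : ℝ => -(x^3)/3 + (t + 1/2) * x^2 / 2 - t/2 * x)
        ((x - t) * (1 / 2 - x)) x := by
    intro x _
    have h1 := (((hasDerivAt_pow 3 x).neg).div_const 3).add
      (((hasDerivAt_pow 2 x).const_mul (t + 1/2)).div_const 2)
    have h2 := h1.sub ((hasDerivAt_id x).const_mul (t/2))
    refine HasDerivAt.congr_deriv h2 ?_
    push_cast
    ring
  rw [intervalIntegral.integral_eq_sub_of_hasDerivAt h]
  · exact (Continuous.intervalIntegrable (by continuity) a b)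

theorem leaky_flat_type2_integral (γ t : ℝ) (hγ : γ ∈ Set.Ioo (0:ℝ) 1)
    (ht : t ∈ Set.Ioo (0:ℝ) 1) (τ : ℤ) (hτ : τ = -1 ∨ τ = 1) :
    (∫ x in t..(1:ℝ), (x - t) * (1 / 2 - x)) +
        γ ^ τ * ∫ x in (0:ℝ)..t, (x - t) * (1 / 2 - x) =
      1 / 12 * (-1 + (1 - γ ^ τ) * (3 - 2 * t) * t ^ 2) ∧
    (∫ x in t..(1:ℝ), (x - t) * (1 / 2 - x)) +
        γ ^ τ * ∫ x in (0:ℝ)..t, (x - t) * (1 / 2 - x) < 0 := by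
  obtain ⟨hγ0, hγ1⟩ := hγ
  obtain ⟨ht0, ht1⟩ := ht
  rw [integral_aux, integral_aux]
  constructor
  · ring
  · rcases hτ with h | h
    · subst h
      rw [zpow_neg_one]
      have hinv : 1 < γ⁻¹ := (one_lt_inv₀ hγ0).mpr hγ1
      nlinarith [mul_pos (sub_pos.mpr hinv) (mul_pos (show (0:ℝ) < 3 - 2*t by linarith) (mul_pos ht0 ht0))]
    · subst h
      rw [zpow_one]
      have h1 : (3 - 2*t) * t^2 < 1 := by
        nlinarith [mul_pos (mul_pos (sub_pos.mpr ht1) (sub_pos.mpr ht1)) ht0]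
      have h2 : 0 < γ * ((3 - 2*t) * t^2) :=
        mul_pos hγ0 (mul_pos (by linarith) (by positivity))
      nlinarith [h1, h2]
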